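/- Let n, m ∈ ℕ with m < n, B(m), …, B(n) ∈ GL(k, ℝ), v ∈ ℝ^k, and ε ∈ (0, π/2). Then there exists R ∈ ℝ^{k×k} such that: (i) ‖R‖ ≤ ε · max{‖B(m)‖, ‖B(m)⁻¹‖}; (ii) B(m) + R ∈ GL(k, ℝ); (iii) ‖B(n)⋯B(m+1)(B(m)+R)v‖ ≥ (sin ε / 2) ‖B(n)⋯B(m+1)‖ · ‖B(m)v‖; (iv) ‖B(m)v‖ = ‖(B(m)+R)v‖. (Algebraic forward Millionshikov Rotation Method.) -/
import Mathlib


open Real Filter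

noncomputable section

variable {d : ℕ}

/-- Shorthand for `ℝ^d` with the Euclidean norm. -/
abbrev Euc (d : ℕ) := EuclideanSpace ℝ (Fin d)

/-- Forward product `fwd A m k = A(m+k−1) ⋯ A(m)` of a sequence of invertible matrices. -/
def fwd (A : ℕ → (Euc d ≃L[ℝ] Euc d)) (m : ℕ) : ℕ → (Euc d ≃L[ℝ] Euc d)
  | 0 => ContinuousLinearEquiv.refl ℝ (Euc d)
  | k + 1 => (fwd A m k).trans (A (m + k))

/-- The transition matrix `Φ_A(n,m)`: `A(n−1)⋯A(m)` for `n ≥ m`, and `Φ_A(m,n)⁻¹` for `n < m`. -/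
def Phi (A : ℕ → (Euc d ≃L[ℝ] Euc d)) (n m : ℕ) : Euc d ≃L[ℝ] Euc d :=
  if m ≤ n then fwd A m (n - m) else (fwd A n (m - n)).symm

/-- A sequence of invertible matrices is a Lyapunov sequence if it and its pointwise
inverse are bounded. -/
def IsLyapunov (A : ℕ → (Euc d ≃L[ℝ] Euc d)) : Prop :=
  (∃ C, ∀ n, ‖(A n : Euc d →L[ℝ] Euc d)‖ ≤ C) ∧
  (∃ C, ∀ n, ‖((A n).symm : Euc d →L[ℝ] Euc d)‖ ≤ C)

/-- The upper Bohl exponent `β̄_A(x₀)` of a (nonzero) vector `x₀`. -/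
def upperBohl (A : ℕ → (Euc d ≃L[ℝ] Euc d)) (x0 : Euc d) : ℝ :=
  ⨅ N : ℕ, sSup {r : ℝ | ∃ n m : ℕ, n - m > N ∧ m > N ∧
    r = ((n : ℝ) - m)⁻¹ * Real.log (‖Phi A n 0 x0‖ / ‖Phi A m 0 x0‖)}

/-- The lower Bohl exponent `β̲_A(x₀)` of a (nonzero) vector `x₀`. -/
def lowerBohl (A : ℕ → (Euc d ≃L[ℝ] Euc d)) (x0 : Euc d) : ℝ :=
  ⨆ N : ℕ, sInf {r : ℝ | ∃ n m : ℕ, n - m > N ∧ m > N ∧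
    r = ((n : ℝ) - m)⁻¹ * Real.log (‖Phi A n 0 x0‖ / ‖Phi A m 0 x0‖)}

/-- The upper Bohl exponent `β̄_A(ℝ^d)` of the full space. -/
def upperBohlFull (A : ℕ → (Euc d ≃L[ℝ] Euc d)) : ℝ :=
  ⨅ N : ℕ, sSup {r : ℝ | ∃ n m : ℕ, n - m > N ∧ m > N ∧ ∃ x0 : Euc d, x0 ≠ 0 ∧
    r = ((n : ℝ) - m)⁻¹ * Real.log (‖Phi A n 0 x0‖ / ‖Phi A m 0 x0‖)}

/-- The lower Bohl exponent `β̲_A(ℝ^d)` of the full space. -/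
def lowerBohlFull (A : ℕ → (Euc d ≃L[ℝ] Euc d)) : ℝ :=
  ⨆ N : ℕ, sInf {r : ℝ | ∃ n m : ℕ, n - m > N ∧ m > N ∧ ∃ x0 : Euc d, x0 ≠ 0 ∧
    r = ((n : ℝ) - m)⁻¹ * Real.log (‖Phi A n 0 x0‖ / ‖Phi A m 0 x0‖)}

/-- The system `x(n+1) = A(n)x(n)` has a Bohl dichotomy. -/
def BohlDichotomy (A : ℕ → (Euc d ≃L[ℝ] Euc d)) : Prop :=
  ∃ L1 L2 : Submodule ℝ (Euc d), IsCompl L1 L2 ∧ ∃ α > (0 : ℝ), ∃ C1 C2 : Euc d → ℝ,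
    (∀ x, 0 < C1 x ∧ 0 < C2 x) ∧
    (∀ x0 ∈ L1, ∀ m n : ℕ, m ≤ n →
      ‖Phi A n 0 x0‖ ≤ C1 x0 * Real.exp (-α * ((n : ℝ) - m)) * ‖Phi A m 0 x0‖) ∧
    (∀ x0 ∈ L2, ∀ m n : ℕ, m ≤ n →
      ‖Phi A n 0 x0‖ ≥ C2 x0 * Real.exp (α * ((n : ℝ) - m)) * ‖Phi A m 0 x0‖)

/-- The system `x(n+1) = A(n)x(n)` has an exponential dichotomy. -/
def ExpDichotomy (A : ℕ → (Euc d ≃L[ℝ] Euc d)) : Prop :=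
  ∃ L1 L2 : Submodule ℝ (Euc d), IsCompl L1 L2 ∧ ∃ α > (0 : ℝ), ∃ K > (0 : ℝ),
    (∀ x0 ∈ L1, ∀ m n : ℕ, m ≤ n →
      ‖Phi A n 0 x0‖ ≤ K * Real.exp (-α * ((n : ℝ) - m)) * ‖Phi A m 0 x0‖) ∧
    (∀ x0 ∈ L2, ∀ m n : ℕ, m ≤ n →
      ‖Phi A n 0 x0‖ ≥ K⁻¹ * Real.exp (α * ((n : ℝ) - m)) * ‖Phi A m 0 x0‖)

open scoped RealInnerProductSpace

section MRot
variable {E : Type*} [NormedAddCommGroup E] [InnerProductSpace ℝ E]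

lemma mrot_inner_expand (u e x : E) (hu : ⟪u,u⟫ = 1) (he : ⟪e,e⟫ = 1)
    (hue : ⟪u,e⟫ = 0) (c s : ℝ) :
    ⟪x + ⟪u,x⟫ • ((c-1)•u + s•e) + ⟪e,x⟫ • ((-s)•u + (c-1)•e),
     x + ⟪u,x⟫ • ((c-1)•u + s•e) + ⟪e,x⟫ • ((-s)•u + (c-1)•e)⟫
    = ⟪x,x⟫ + (⟪u,x⟫^2 + ⟪e,x⟫^2) * (c^2 + s^2 - 1) := by
  have h1 : ⟪x,u⟫ = ⟪u,x⟫ := real_inner_comm u x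
  have h2 : ⟪x,e⟫ = ⟪e,x⟫ := real_inner_comm e x
  have h3 : ⟪e,u⟫ = 0 := by rw [real_inner_comm]; exact hue
  simp only [inner_add_left, inner_add_right, real_inner_smul_left, real_inner_smul_right,
    hu, he, hue, h1, h2, h3]
  ring

lemma mrot_diff_expand (u e x : E) (hu : ⟪u,u⟫ = 1) (he : ⟪e,e⟫ = 1)
    (hue : ⟪u,e⟫ = 0) (c s : ℝ) :
    ⟪⟪u,x⟫ • ((c-1)•u + s•e) + ⟪e,x⟫ • ((-s)•u + (c-1)•e),
     ⟪u,x⟫ • ((c-1)•u + s•e) + ⟪e,x⟫ • ((-s)•u + (c-1)•e)⟫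
    = (⟪u,x⟫^2 + ⟪e,x⟫^2) * ((c-1)^2 + s^2) := by
  have h3 : ⟪e,u⟫ = 0 := by rw [real_inner_comm]; exact hue
  simp only [inner_add_left, inner_add_right, real_inner_smul_left, real_inner_smul_right,
    hu, he, hue, h3]
  ring

lemma mrot_bessel (u e x : E) (hu : ⟪u,u⟫ = 1) (he : ⟪e,e⟫ = 1)
    (hue : ⟪u,e⟫ = 0) :
    ⟪u,x⟫^2 + ⟪e,x⟫^2 ≤ ‖x‖^2 := by
  have h := real_inner_self_nonneg (x := x - ⟪u,x⟫ • u - ⟪e,x⟫ • e)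
  have h1 : ⟪x,u⟫ = ⟪u,x⟫ := real_inner_comm u x
  have h2 : ⟪x,e⟫ = ⟪e,x⟫ := real_inner_comm e x
  have h3 : ⟪e,u⟫ = 0 := by rw [real_inner_comm]; exact hue
  simp only [inner_sub_left, inner_sub_right, real_inner_smul_left, real_inner_smul_right,
    hu, he, hue, h1, h2, h3] at h
  have h4 := real_inner_self_eq_norm_sq x
  nlinarith [h]

end MRot

set_option maxHeartbeats 1000000

/-- Algebraic forward Millionshikov Rotation Method: given invertible
matrices `B(m),…,B(n)` (`m < n`), `v ∈ ℝ^k` and `ε ∈ (0, π/2)`, there is `R` with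
(i) `‖R‖ ≤ ε·max{‖B(m)‖, ‖B(m)⁻¹‖}`, (ii) `B(m) + R` invertible,
(iii) `‖B(n)⋯B(m+1)(B(m)+R)v‖ ≥ (sin ε/2)‖B(n)⋯B(m+1)‖·‖B(m)v‖` and
(iv) `‖B(m)v‖ = ‖(B(m)+R)v‖`.  Here `B(n)⋯B(m+1) = fwd B (m+1) (n−m)`. -/
theorem algebraic_forward_millionshikov (kk : ℕ)
    (B : ℕ → (Euc kk ≃L[ℝ] Euc kk))
    (m n : ℕ) (hmn : m < n)
    (v : Euc kk) (ε : ℝ) (hε : ε ∈ Set.Ioo 0 (π / 2)) :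
    ∃ R : Euc kk →L[ℝ] Euc kk,
      ‖R‖ ≤ ε * max ‖(B m : Euc kk →L[ℝ] Euc kk)‖ ‖((B m).symm : Euc kk →L[ℝ] Euc kk)‖ ∧
      Function.Bijective ((B m : Euc kk →L[ℝ] Euc kk) + R) ∧
      ‖(fwd B (m + 1) (n - m)) (((B m : Euc kk →L[ℝ] Euc kk) + R) v)‖ ≥
        Real.sin ε / 2 * ‖(fwd B (m + 1) (n - m) : Euc kk →L[ℝ] Euc kk)‖ * ‖B m v‖ ∧
      ‖B m v‖ = ‖((B m : Euc kk →L[ℝ] Euc kk) + R) v‖ := by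
  obtain ⟨hε0, hεπ⟩ := hε
  have hs0 : 0 < Real.sin ε :=
    Real.sin_pos_of_pos_of_lt_pi hε0 (hεπ.trans (by linarith [Real.pi_pos]))
  have hs1 : Real.sin ε ≤ 1 := Real.sin_le_one ε
  have hcc : 2 - 2 * Real.cos ε ≤ ε ^ 2 := by
    have := Real.one_sub_sq_div_two_le_cos (x := ε); linarith
  by_cases hv : v = 0
  · refine ⟨0, ?_, ?_, ?_, ?_⟩
    · simp only [norm_zero]; positivity
    · simpa using (B m).bijective
    · subst hv
      simp only [map_zero, norm_zero, mul_zero, ge_iff_le, le_refl]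
    · subst hv
      simp only [map_zero, norm_zero]
  · obtain ⟨P, hPdef⟩ : ∃ P : Euc kk →L[ℝ] Euc kk,
        P = (fwd B (m+1) (n-m) : Euc kk →L[ℝ] Euc kk) := ⟨_, rfl⟩
    obtain ⟨u, hudef⟩ : ∃ u : Euc kk, u = (B m) v := ⟨_, rfl⟩
    have hu0 : u ≠ 0 := fun h => hv ((B m).map_eq_zero_iff.mp (hudef ▸ h))
    have hun : 0 < ‖u‖ := norm_pos_iff.mpr hu0
    obtain ⟨uh, huhdef⟩ : ∃ uh : Euc kk, uh = ‖u‖⁻¹ • u := ⟨_, rfl⟩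
    have huh1 : ‖uh‖ = 1 := by rw [huhdef]; exact norm_smul_inv_norm hu0
    have huh0 : uh ≠ 0 := by intro h; rw [h, norm_zero] at huh1; norm_num at huh1
    have huu : ⟪uh,uh⟫ = 1 := by rw [real_inner_self_eq_norm_sq, huh1]; norm_num
    have huuh : u = ‖u‖ • uh := by rw [huhdef, smul_inv_smul₀ hun.ne']
    have hP0 : 0 < ‖P‖ := by
      have h1 : P uh ≠ 0 := by
        rw [hPdef]
        simp only [ContinuousLinearEquiv.coe_coe]
        intro h
        exact huh0 ((fwd B (m+1) (n-m)).map_eq_zero_iff.mp h)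
      calc (0:ℝ) < ‖P uh‖ := norm_pos_iff.mpr h1
        _ ≤ ‖P‖ := P.unit_le_opNorm uh huh1.le
    obtain ⟨R', hiso, hdiff, hfast⟩ : ∃ R' : Euc kk →L[ℝ] Euc kk,
        (∀ x, ‖R' x‖ = ‖x‖) ∧ (∀ x, ‖R' x - x‖ ≤ ε * ‖x‖) ∧
        Real.sin ε / 2 * ‖P‖ * ‖u‖ ≤ ‖P (R' u)‖ := by
      by_cases hA : ‖P‖ / 2 ≤ ‖P uh‖
      · refine ⟨ContinuousLinearMap.id ℝ _, fun x => rfl, fun x => by simp; positivity, ?_⟩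
        have hPu : ‖P u‖ = ‖u‖ * ‖P uh‖ := by
          conv_lhs => rw [huuh]
          rw [map_smul, norm_smul, Real.norm_eq_abs, abs_of_pos hun]
        simp only [ContinuousLinearMap.id_apply]
        rw [hPu]
        nlinarith [mul_le_mul_of_nonneg_left hA hun.le,
          mul_nonneg (mul_nonneg (by linarith : (0:ℝ) ≤ 1 - Real.sin ε) hP0.le) hun.le]
      · push_neg at hA
        have hsph : (Metric.sphere (0 : Euc kk) 1).Nonempty :=
          ⟨uh, mem_sphere_zero_iff_norm.mpr huh1⟩
        obtain ⟨z, hzs, hzmax⟩ := (isCompact_sphere (0 : Euc kk) 1).exists_isMaxOn hsph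
          ((continuous_norm.comp P.continuous).continuousOn)
        have hz1 : ‖z‖ = 1 := by simpa [mem_sphere_zero_iff_norm] using hzs
        have hPzle : ‖P z‖ ≤ ‖P‖ := by
          have h := P.le_opNorm z
          rwa [hz1, mul_one] at h
        have hPz : ‖P z‖ = ‖P‖ := by
          refine le_antisymm hPzle (P.opNorm_le_bound (norm_nonneg _) (fun x => ?_))
          rcases eq_or_ne x 0 with rfl | hx
          · simp
          · have hxn : 0 < ‖x‖ := norm_pos_iff.mpr hx
            have hy : (‖x‖⁻¹ • x) ∈ Metric.sphere (0 : Euc kk) 1 :=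
              mem_sphere_zero_iff_norm.mpr (norm_smul_inv_norm hx)
            have hle : ‖P (‖x‖⁻¹ • x)‖ ≤ ‖P z‖ := hzmax hy
            rw [map_smul, norm_smul, norm_inv, norm_norm] at hle
            calc ‖P x‖ = ‖x‖ * (‖x‖⁻¹ * ‖P x‖) := by field_simp
              _ ≤ ‖x‖ * ‖P z‖ := mul_le_mul_of_nonneg_left hle hxn.le
              _ = ‖P z‖ * ‖x‖ := mul_comm _ _
        obtain ⟨p, hpdef⟩ : ∃ p : ℝ, p = ⟪uh, z⟫ := ⟨_, rfl⟩
        obtain ⟨z', hz'def⟩ : ∃ z' : Euc kk, z' = z - p • uh := ⟨_, rfl⟩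
        have hortho : ⟪uh, z'⟫ = 0 := by
          rw [hz'def, inner_sub_right, real_inner_smul_right, huu, ← hpdef]
          ring
        have hz'0 : z' ≠ 0 := by
          intro h
          have hzz : z = p • uh := by
            have h4 := hz'def
            rw [h] at h4
            exact sub_eq_zero.mp h4.symm
          have hnp : |p| = 1 := by
            have h2 : ‖z‖ = |p| * ‖uh‖ := by rw [hzz, norm_smul, Real.norm_eq_abs]
            rw [huh1, mul_one, hz1] at h2
            exact h2.symm
          have hPzz : ‖P z‖ = |p| * ‖P uh‖ := by
            rw [hzz, map_smul, norm_smul, Real.norm_eq_abs]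
          rw [hnp, one_mul, hPz] at hPzz
          linarith [hA, hP0]
        obtain ⟨bb, hbbdef⟩ : ∃ bb : ℝ, bb = ‖z'‖ := ⟨_, rfl⟩
        have hb0 : 0 < bb := hbbdef ▸ norm_pos_iff.mpr hz'0
        obtain ⟨e, hedef⟩ : ∃ e : Euc kk, e = bb⁻¹ • z' := ⟨_, rfl⟩
        have he1 : ‖e‖ = 1 := by
          rw [hedef, hbbdef]; exact norm_smul_inv_norm hz'0
        have hee : ⟪e,e⟫ = 1 := by rw [real_inner_self_eq_norm_sq, he1]; norm_num
        have hue : ⟪uh, e⟫ = 0 := by rw [hedef, real_inner_smul_right, hortho, mul_zero]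
        have hz_dec : z = p • uh + bb • e := by
          rw [hedef, smul_inv_smul₀ hb0.ne', hz'def]
          abel
        have hpb : p^2 + bb^2 = 1 := by
          have hzz : ⟪z, z⟫ = p^2 + bb^2 := by
            have h3 : ⟪e,uh⟫ = 0 := by rw [real_inner_comm]; exact hue
            rw [hz_dec]
            simp only [inner_add_left, inner_add_right, real_inner_smul_left,
              real_inner_smul_right, huu, hee, hue, h3]
            ring
          rw [real_inner_self_eq_norm_sq, hz1] at hzz
          linarith [hzz]
        have hpabs : |p| ≤ 1 := by nlinarith [abs_nonneg p, sq_abs p]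
        have hble : bb ≤ 1 := by nlinarith
        have hPe : ‖P‖ / 2 < ‖P e‖ := by
          have h1 : ‖P z‖ ≤ |p| * ‖P uh‖ + bb * ‖P e‖ := by
            rw [hz_dec, map_add, map_smul, map_smul]
            calc ‖p • P uh + bb • P e‖ ≤ ‖p • P uh‖ + ‖bb • P e‖ := norm_add_le _ _
              _ = |p| * ‖P uh‖ + bb * ‖P e‖ := by
                  rw [norm_smul, norm_smul, Real.norm_eq_abs, Real.norm_eq_abs, abs_of_pos hb0]
          rw [hPz] at h1
          nlinarith [norm_nonneg (P uh), norm_nonneg (P e), abs_nonneg p]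
        obtain ⟨e', he'1, hue', hfastw⟩ : ∃ e' : Euc kk, ‖e'‖ = 1 ∧ ⟪uh, e'⟫ = 0 ∧
            Real.sin ε / 2 * ‖P‖ ≤ ‖P (Real.cos ε • uh + Real.sin ε • e')‖ := by
          have hdiffvec : (Real.cos ε • uh + Real.sin ε • e)
              - (Real.cos ε • uh + Real.sin ε • (-e)) = (2*Real.sin ε) • e := by
            module
          have hsum : 2 * Real.sin ε * ‖P e‖ ≤
              ‖P (Real.cos ε • uh + Real.sin ε • e)‖ +
              ‖P (Real.cos ε • uh + Real.sin ε • (-e))‖ := by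
            calc 2 * Real.sin ε * ‖P e‖ = ‖(2*Real.sin ε) • P e‖ := by
                  rw [norm_smul, Real.norm_eq_abs, abs_of_pos (by linarith : (0:ℝ) < 2*Real.sin ε)]
              _ = ‖P (Real.cos ε • uh + Real.sin ε • e)
                  - P (Real.cos ε • uh + Real.sin ε • (-e))‖ := by
                  rw [← map_smul, ← hdiffvec, map_sub]
              _ ≤ _ := norm_sub_le _ _
          have hmul : Real.sin ε * (‖P‖/2) ≤ Real.sin ε * ‖P e‖ :=
            mul_le_mul_of_nonneg_left hPe.le hs0.le
          rcases le_total ‖P (Real.cos ε • uh + Real.sin ε • (-e))‖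
              ‖P (Real.cos ε • uh + Real.sin ε • e)‖ with h | h
          · exact ⟨e, he1, hue, by nlinarith⟩
          · refine ⟨-e, by simpa using he1, by simp [hue], by nlinarith⟩
        obtain ⟨c, hcdef⟩ : ∃ c : ℝ, c = Real.cos ε := ⟨_, rfl⟩
        obtain ⟨s, hsdef⟩ : ∃ s : ℝ, s = Real.sin ε := ⟨_, rfl⟩
        have hee' : ⟪e',e'⟫ = 1 := by rw [real_inner_self_eq_norm_sq, he'1]; norm_num
        have hcs : c^2 + s^2 = 1 := by
          rw [hcdef, hsdef]; exact Real.cos_sq_add_sin_sq ε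
        obtain ⟨a1, ha1def⟩ : ∃ a1 : Euc kk, a1 = (c-1) • uh + s • e' := ⟨_, rfl⟩
        obtain ⟨b1, hb1def⟩ : ∃ b1 : Euc kk, b1 = (-s) • uh + (c-1) • e' := ⟨_, rfl⟩
        obtain ⟨R', hR'def⟩ : ∃ R' : Euc kk →L[ℝ] Euc kk,
            R' = ContinuousLinearMap.id ℝ (Euc kk)
              + (innerSL ℝ uh).smulRight a1 + (innerSL ℝ e').smulRight b1 := ⟨_, rfl⟩
        have hR'apply : ∀ x, R' x = x + ⟪uh, x⟫ • a1 + ⟪e', x⟫ • b1 := by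
          intro x
          rw [hR'def]
          simp only [ContinuousLinearMap.add_apply, ContinuousLinearMap.id_apply,
            ContinuousLinearMap.smulRight_apply, innerSL_apply_apply]
        have hisoR : ∀ x, ‖R' x‖ = ‖x‖ := by
          intro x
          have h := mrot_inner_expand uh e' x huu hee' hue' c s
          have h2 : ‖R' x‖^2 = ‖x‖^2 := by
            rw [← real_inner_self_eq_norm_sq, ← real_inner_self_eq_norm_sq, hR'apply x,
              ha1def, hb1def, h, hcs]
            ring
          have h3 := congrArg Real.sqrt h2
          rwa [Real.sqrt_sq (norm_nonneg _), Real.sqrt_sq (norm_nonneg _)] at h3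
        have hdiffR : ∀ x, ‖R' x - x‖ ≤ ε * ‖x‖ := by
          intro x
          have hXx : R' x - x = ⟪uh,x⟫ • a1 + ⟪e',x⟫ • b1 := by rw [hR'apply]; abel
          have h := mrot_diff_expand uh e' x huu hee' hue' c s
          have hbess := mrot_bessel uh e' x huu hee' hue'
          have hc1 : (c-1)^2 + s^2 = 2 - 2*c := by linear_combination hcs
          have hcle : c ≤ 1 := by rw [hcdef]; exact Real.cos_le_one ε
          have h2 : ‖R' x - x‖^2 ≤ (ε * ‖x‖)^2 := by
            rw [← real_inner_self_eq_norm_sq, hXx, ha1def, hb1def, h, hc1]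
            calc (⟪uh,x⟫^2 + ⟪e',x⟫^2) * (2 - 2*c) ≤ ‖x‖^2 * (2-2*c) :=
                mul_le_mul_of_nonneg_right hbess (by linarith)
              _ ≤ ‖x‖^2 * ε^2 := mul_le_mul_of_nonneg_left
                  (by rw [hcdef] at *; exact hcc) (sq_nonneg _)
              _ = (ε * ‖x‖)^2 := by ring
          have h3 := Real.sqrt_le_sqrt h2
          rwa [Real.sqrt_sq (norm_nonneg _), Real.sqrt_sq (by positivity)] at h3
        have h0e'u : ⟪e', uh⟫ = 0 := by rw [real_inner_comm]; exact hue'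
        have hR'uh : R' uh = c • uh + s • e' := by
          rw [hR'apply, huu, h0e'u, ha1def, hb1def]
          module
        have hR'u : R' u = ‖u‖ • (c • uh + s • e') := by
          calc R' u = R' (‖u‖ • uh) := by rw [← huuh]
            _ = ‖u‖ • R' uh := map_smul _ _ _
            _ = _ := by rw [hR'uh]
        refine ⟨R', hisoR, hdiffR, ?_⟩
        rw [hR'u, map_smul, norm_smul, Real.norm_eq_abs, abs_of_pos hun]
        calc Real.sin ε/2 * ‖P‖ * ‖u‖ = ‖u‖ * (Real.sin ε/2 * ‖P‖) := by ring
          _ ≤ ‖u‖ * ‖P (c • uh + s • e')‖ := by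
              refine mul_le_mul_of_nonneg_left ?_ hun.le
              rw [hcdef, hsdef]
              exact hfastw
    -- assemble
    refine ⟨R' ∘L (B m : Euc kk →L[ℝ] Euc kk) - (B m : Euc kk →L[ℝ] Euc kk), ?_, ?_, ?_, ?_⟩
    · have hRn : ‖R' ∘L (B m : Euc kk →L[ℝ] Euc kk) - (B m : Euc kk →L[ℝ] Euc kk)‖
          ≤ ε * ‖(B m : Euc kk →L[ℝ] Euc kk)‖ := by
        refine ContinuousLinearMap.opNorm_le_bound _ (by positivity) (fun x => ?_)
        have h1 : (R' ∘L (B m : Euc kk →L[ℝ] Euc kk) - (B m : Euc kk →L[ℝ] Euc kk)) x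
            = R' ((B m : Euc kk →L[ℝ] Euc kk) x) - (B m : Euc kk →L[ℝ] Euc kk) x := by
          simp [ContinuousLinearMap.sub_apply]
        rw [h1]
        calc ‖R' ((B m : Euc kk →L[ℝ] Euc kk) x) - (B m : Euc kk →L[ℝ] Euc kk) x‖
            ≤ ε * ‖(B m : Euc kk →L[ℝ] Euc kk) x‖ := hdiff _
          _ ≤ ε * (‖(B m : Euc kk →L[ℝ] Euc kk)‖ * ‖x‖) :=
            mul_le_mul_of_nonneg_left ((B m : Euc kk →L[ℝ] Euc kk).le_opNorm x) hε0.le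
          _ = ε * ‖(B m : Euc kk →L[ℝ] Euc kk)‖ * ‖x‖ := by ring
      refine hRn.trans ?_
      exact mul_le_mul_of_nonneg_left (le_max_left _ _) hε0.le
    · have hEq : (B m : Euc kk →L[ℝ] Euc kk)
          + (R' ∘L (B m : Euc kk →L[ℝ] Euc kk) - (B m : Euc kk →L[ℝ] Euc kk))
          = R' ∘L (B m : Euc kk →L[ℝ] Euc kk) := by abel
      rw [hEq]
      have hR'inj : Function.Injective R' := by
        intro a b hab
        have h1 : ‖R' (a - b)‖ = 0 := by rw [map_sub, hab]; simp
        rw [hiso] at h1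
        exact sub_eq_zero.mp (norm_eq_zero.mp h1)
      have hR'surj : Function.Surjective R' :=
        (LinearMap.injective_iff_surjective (f := (R' : Euc kk →ₗ[ℝ] Euc kk))).mp hR'inj
      rw [ContinuousLinearMap.coe_comp']
      exact Function.Bijective.comp ⟨hR'inj, hR'surj⟩ (B m).bijective
    · have happ : ((B m : Euc kk →L[ℝ] Euc kk)
          + (R' ∘L (B m : Euc kk →L[ℝ] Euc kk) - (B m : Euc kk →L[ℝ] Euc kk))) v = R' u := by
        simp only [ContinuousLinearMap.add_apply, ContinuousLinearMap.sub_apply,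
          ContinuousLinearMap.comp_apply]
        rw [hudef]
        simp only [ContinuousLinearEquiv.coe_coe]
        abel
      rw [happ]
      have hBmv : ‖(B m) v‖ = ‖u‖ := by rw [hudef]
      have hfwd : ‖(fwd B (m+1) (n-m)) (R' u)‖ = ‖P (R' u)‖ := by
        rw [hPdef]; simp
      have hfwdn : ‖(fwd B (m + 1) (n - m) : Euc kk →L[ℝ] Euc kk)‖ = ‖P‖ := by rw [hPdef]
      rw [hBmv, hfwd, hfwdn]
      exact hfast
    · have happ : ((B m : Euc kk →L[ℝ] Euc kk)
          + (R' ∘L (B m : Euc kk →L[ℝ] Euc kk) - (B m : Euc kk →L[ℝ] Euc kk))) v = R' u := by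
        simp only [ContinuousLinearMap.add_apply, ContinuousLinearMap.sub_apply,
          ContinuousLinearMap.comp_apply]
        rw [hudef]
        simp only [ContinuousLinearEquiv.coe_coe]
        abel
      rw [happ, hiso u, hudef]
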